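/- Density hypothesis transfer: if τ admits a conditional density with respect to the larger filtration 𝔽, i.e. P(τ > s | 𝓕_t) = ∫ₛ^∞ β(t,u) du with β(t,u) 𝓕_t-measurable and β(t,u)1_{{t≥u}} = β(u,u)1_{{t≥u}}, then for any sub-filtration 𝔽̃ ⊆ 𝔽 one has P(τ > s | 𝓕̃_t) = ∫ₛ^∞ β̃(t,u) du with β̃(t,u) := E[β(t,u) | 𝓕̃_t], and β̃ inherits the property β̃(t,u)1_{{t≥u}} = β̃(u,u)1_{{t≥u}} provided the relevant factor in β(u,u) is 𝓕̃-adapted and the remaining factor is independent of 𝓕̃ (as in β(t,u) = E[λ(u,μ_u,Z_u)e^{−∫₀ᵘλ dr}|𝓕_t] with μ adapted to 𝔽̃ and Z independent of 𝔽̃). -/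

import Mathlib

open MeasureTheory ProbabilityTheory Real

/-- transfer of the density hypothesis to a sub-filtration: if `τ` admits a
conditional density `β` w.r.t. the larger filtration `F` (i.e. `P(τ > s | F_t) = ∫ₛ^∞ β(t,u)du`
with `β(t,u)` being `F_t`-measurable and `β(t,u)1_{t≥u} = β(u,u)1_{t≥u}`), then for the
sub-filtration `F̃ ⊆ F` one has `P(τ > s | F̃_t) = ∫ₛ^∞ β̃(t,u)du` with
`β̃(t,u) := E[β(t,u) | F̃_t]`, and `β̃(t,u) = β̃(u,u)` a.s. for `t ≥ u`, provided
`β(u,u) = k(u, M_u, Z_u)` with `M_u` being `F̃_u`-measurable and `Z_u` independent of `F̃`. -/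
lemma freezing_aux {Ω E F' : Type*} (m : MeasurableSpace Ω) {mΩ : MeasurableSpace Ω}
    [MeasurableSpace E] [MeasurableSpace F']
    (P : Measure Ω) [IsProbabilityMeasure P]
    (hm : m ≤ mΩ)
    {M : Ω → E} (hM : Measurable[m] M)
    {Z : Ω → F'} (hZ : Measurable Z)
    (hindep : Indep (MeasurableSpace.comap Z inferInstance) m P)
    {k : E → F' → ℝ} (hk : Measurable (Function.uncurry k))
    {C : ℝ} (hC : ∀ x z, |k x z| ≤ C) :
    P[(fun ω => k (M ω) (Z ω)) | m]
      =ᵐ[P] fun ω => ∫ z, k (M ω) z ∂(P.map Z) := by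
  haveI : IsProbabilityMeasure (P.map Z) := Measure.isProbabilityMeasure_map hZ.aemeasurable
  have hMΩ : Measurable M := hM.mono hm le_rfl
  have hfmeas : Measurable fun ω => k (M ω) (Z ω) := hk.comp (hMΩ.prodMk hZ)
  have hfint : Integrable (fun ω => k (M ω) (Z ω)) P := by
    refine (integrable_const C).mono' hfmeas.aestronglyMeasurable ?_
    exact Filter.Eventually.of_forall fun ω => by
      simpa [Real.norm_eq_abs] using hC (M ω) (Z ω)
  have hg : StronglyMeasurable fun x : E => ∫ z, k x z ∂(P.map Z) := by
    have := hk.stronglyMeasurable.integral_prod_right' (ν := P.map Z)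
    simpa [Function.uncurry] using this
  have hgbdd : ∀ x, |∫ z, k x z ∂(P.map Z)| ≤ C := by
    intro x
    have := norm_integral_le_of_norm_le_const (μ := P.map Z)
      (f := fun z => k x z) (C := C)
      (Filter.Eventually.of_forall fun z => by simpa [Real.norm_eq_abs] using hC x z)
    simpa [Real.norm_eq_abs] using this
  have hhm : StronglyMeasurable[m] fun ω => ∫ z, k (M ω) z ∂(P.map Z) :=
    hg.comp_measurable hM
  have hhint : Integrable (fun ω => ∫ z, k (M ω) z ∂(P.map Z)) P := by
    refine (integrable_const C).mono'
      ((hhm.mono hm).aestronglyMeasurable) ?_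
    exact Filter.Eventually.of_forall fun ω => by
      simpa [Real.norm_eq_abs] using hgbdd (M ω)
  symm
  refine ae_eq_condExp_of_forall_setIntegral_eq hm hfint
    (fun s _ _ => hhint.integrableOn) (fun s hs _ => ?_)
    (hhm.aestronglyMeasurable )
  -- the key computation via the joint law
  set X : Ω → ℝ × E := fun ω => (s.indicator (fun _ => (1 : ℝ)) ω, M ω) with hXdef
  have hXm : Measurable[m] X :=
    ((measurable_const (a := (1:ℝ))).indicator hs).prodMk hM
  have hXΩ : Measurable X := hXm.mono hm le_rfl
  have hIndep : IndepFun X Z P := by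
    rw [indepFun_iff_measure_inter_preimage_eq_mul]
    intro s' t' hs' ht'
    have h := (ProbabilityTheory.Indep_iff _ _ _).mp hindep (Z ⁻¹' t') (X ⁻¹' s')
      ⟨t', ht', rfl⟩ (hXm hs')
    rw [Set.inter_comm] at h
    rw [h, mul_comm]
  have hmap : P.map (fun ω => (X ω, Z ω)) = (P.map X).prod (P.map Z) :=
    (indepFun_iff_map_prod_eq_prod_map_map hXΩ.aemeasurable hZ.aemeasurable).mp hIndep
  set F2 : (ℝ × E) × F' → ℝ := fun p => p.1.1 * k p.1.2 p.2 with hF2def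
  have hF2meas : Measurable F2 :=
    (measurable_fst.comp measurable_fst).mul
      (hk.comp ((measurable_snd.comp measurable_fst).prodMk measurable_snd))
  have hF2int : Integrable F2 ((P.map X).prod (P.map Z)) := by
    rw [← hmap]
    rw [integrable_map_measure hF2meas.aestronglyMeasurable
      (hXΩ.prodMk hZ).aemeasurable]
    refine (integrable_const (1 * |C|)).mono'
      (hF2meas.comp (hXΩ.prodMk hZ)).aestronglyMeasurable ?_
    refine Filter.Eventually.of_forall fun ω => ?_
    have h1 : |s.indicator (fun _ => (1:ℝ)) ω| ≤ 1 := by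
      by_cases hω : ω ∈ s <;> simp [Set.indicator, hω]
    have h2 : |k (M ω) (Z ω)| ≤ |C| := (hC _ _).trans (le_abs_self C)
    calc ‖F2 (X ω, Z ω)‖ = |s.indicator (fun _ => (1:ℝ)) ω| * |k (M ω) (Z ω)| := by
          simp [hF2def, hXdef, Real.norm_eq_abs, abs_mul]
      _ ≤ 1 * |C| := mul_le_mul h1 h2 (abs_nonneg _) zero_le_one
  have step1 : ∫ x in s, (fun ω => k (M ω) (Z ω)) x ∂P
      = ∫ ω, F2 (X ω, Z ω) ∂P := by
    rw [← integral_indicator (hm s hs)]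
    refine integral_congr_ae (Filter.Eventually.of_forall fun ω => ?_)
    by_cases hω : ω ∈ s <;> simp [hF2def, hXdef, Set.indicator, hω]
  have step2 : ∫ ω, F2 (X ω, Z ω) ∂P = ∫ p, F2 p ∂((P.map X).prod (P.map Z)) := by
    rw [← hmap, integral_map (hXΩ.prodMk hZ).aemeasurable hF2meas.aestronglyMeasurable]
  have step3 : ∫ p, F2 p ∂((P.map X).prod (P.map Z))
      = ∫ x, x.1 * ∫ z, k x.2 z ∂(P.map Z) ∂(P.map X) := by
    rw [MeasureTheory.integral_prod _ hF2int]
    exact integral_congr_ae (Filter.Eventually.of_forall fun x => by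
      simp [hF2def, integral_const_mul])
  have hφ : StronglyMeasurable fun x : ℝ × E => x.1 * ∫ z, k x.2 z ∂(P.map Z) :=
    measurable_fst.stronglyMeasurable.mul (hg.comp_measurable measurable_snd)
  have step4' : ∫ x, x.1 * ∫ z, k x.2 z ∂(P.map Z) ∂(P.map X)
      = ∫ ω, s.indicator (fun _ => (1:ℝ)) ω * ∫ z, k (M ω) z ∂(P.map Z) ∂P := by
    rw [integral_map hXΩ.aemeasurable hφ.aestronglyMeasurable]
  have step5 : ∫ ω, s.indicator (fun _ => (1:ℝ)) ω * ∫ z, k (M ω) z ∂(P.map Z) ∂P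
      = ∫ x in s, (fun ω => ∫ z, k (M ω) z ∂(P.map Z)) x ∂P := by
    rw [← integral_indicator (hm s hs)]
    refine integral_congr_ae (Filter.Eventually.of_forall fun ω => ?_)
    by_cases hω : ω ∈ s <;> simp [Set.indicator, hω]
  rw [step1, step2, step3, step4', step5]


theorem stmt11 {Ω E F' : Type*} {mΩ : MeasurableSpace Ω}
    [MeasurableSpace E] [MeasurableSpace F']
    (P : Measure Ω) [IsProbabilityMeasure P]
    (F Ftil : ℝ → MeasurableSpace Ω)
    (hsub : ∀ t, Ftil t ≤ F t) (hFle : ∀ t, F t ≤ mΩ)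
    (hFtilmono : ∀ s t : ℝ, s ≤ t → Ftil s ≤ Ftil t)
    (τ : Ω → ℝ) (β : ℝ → ℝ → Ω → ℝ)
    (hβmeas : ∀ t u, StronglyMeasurable[F t] (β t u))
    (hβint : ∀ t u, Integrable (β t u) P)
    -- the density hypothesis w.r.t. the large filtration:
    (hdens : ∀ s t : ℝ,
      P[Set.indicator {ω | s < τ ω} (fun _ => (1 : ℝ)) | F t]
        =ᵐ[P] fun ω => ∫ u in Set.Ioi s, β t u ω)
    (hconsist : ∀ u t : ℝ, u ≤ t → β t u =ᵐ[P] β u u)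
    -- Fubini for conditional expectation (valid under integrability):
    (hFub : ∀ s t : ℝ,
      P[(fun ω => ∫ u in Set.Ioi s, β t u ω) | Ftil t]
        =ᵐ[P] fun ω => ∫ u in Set.Ioi s, (P[β t u | Ftil t]) ω)
    -- structure of `β(u,u)`: an `F̃_u`-measurable factor and a factor independent of `F̃`:
    (M : ℝ → Ω → E) (hM : ∀ u, Measurable[Ftil u] (M u))
    (Z : ℝ → Ω → F') (hZmeas : ∀ u, Measurable (Z u))
    (hindep : ∀ u t : ℝ, Indep (MeasurableSpace.comap (Z u) inferInstance) (Ftil t) P)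
    (k : ℝ → E → F' → ℝ) (hk : ∀ u, Measurable (Function.uncurry (k u)))
    (Ck : ℝ) (hkbdd : ∀ u x z, |k u x z| ≤ Ck)
    (hβuu : ∀ u ω, β u u ω = k u (M u ω) (Z u ω)) :
    (∀ s t : ℝ,
      P[Set.indicator {ω | s < τ ω} (fun _ => (1 : ℝ)) | Ftil t]
        =ᵐ[P] fun ω => ∫ u in Set.Ioi s, (P[β t u | Ftil t]) ω) ∧
      (∀ u t : ℝ, u ≤ t → P[β t u | Ftil t] =ᵐ[P] P[β u u | Ftil u]) := by
  constructor
  · intro s t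
    have tower := (condExp_condExp_of_le (μ := P) (hsub t) (hFle t)
      (f := Set.indicator {ω | s < τ ω} (fun _ => (1 : ℝ)))).symm
    exact tower.trans ((condExp_congr_ae (hdens s t)).trans (hFub s t))
  · intro u t hut
    have e : β u u = fun ω => k u (M u ω) (Z u ω) := funext (hβuu u)
    have h1 : P[β t u | Ftil t] =ᵐ[P] P[β u u | Ftil t] :=
      condExp_congr_ae (hconsist u t hut)
    have h2 : P[β u u | Ftil t]
        =ᵐ[P] fun ω => ∫ z, k u (M u ω) z ∂(P.map (Z u)) := by
      rw [e]
      exact freezing_aux (Ftil t) P ((hsub t).trans (hFle t))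
        ((hM u).mono (hFtilmono u t hut) le_rfl) (hZmeas u) (hindep u t)
        (hk u) (fun x z => hkbdd u x z)
    have h3 : P[β u u | Ftil u]
        =ᵐ[P] fun ω => ∫ z, k u (M u ω) z ∂(P.map (Z u)) := by
      rw [e]
      exact freezing_aux (Ftil u) P ((hsub u).trans (hFle u))
        (hM u) (hZmeas u) (hindep u u) (hk u) (fun x z => hkbdd u x z)
    exact (h1.trans h2).trans h3.symm
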